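/- Let d ≥ 1 and let G be a geometric graph in ℝ^d. Then χ_c(G) ≤ 2·(⌈√d⌉ + 1)^d, and moreover 2·(⌈√d⌉ + 1)^d < 2·e^{2√d}·d^{d/2}. -/

import Mathlib

open Filter MeasureTheory SimpleGraph

set_option linter.unusedVariables false

/-- A clique colouring with `k` colours: no maximal clique containing at least
two vertices is monochromatic. -/
def IsCliqueColouring {V : Type*} {k : ℕ} (G : SimpleGraph V) (c : V → Fin k) : Prop :=
  ∀ S : Set V, Maximal G.IsClique S → 2 ≤ S.ncard → ¬ ∃ a : Fin k, ∀ v ∈ S, c v = a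

/-- The clique chromatic number: the least number of colours in a clique colouring. -/
noncomputable def cliqueChromNum {V : Type*} (G : SimpleGraph V) : ℕ :=
  sInf {k : ℕ | ∃ c : V → Fin k, IsCliqueColouring G c}

/-- `G` is a geometric graph in `ℝ^d`: the vertices can be placed at points of `ℝ^d`
so that distinct vertices are adjacent iff their Euclidean distance is at most some
threshold `r > 0`. -/
def IsGeometricIn {V : Type*} (G : SimpleGraph V) (d : ℕ) : Prop :=
  ∃ (x : V → EuclideanSpace ℝ (Fin d)) (r : ℝ), 0 < r ∧
    ∀ u v : V, G.Adj u v ↔ (u ≠ v ∧ dist (x u) (x v) ≤ r)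

/-- If `G` is a geometric graph in `ℝ^d` then `χ_c(G) ≤ 2(⌈√d⌉+1)^d`, and
`2(⌈√d⌉+1)^d < 2 e^{2√d} d^{d/2}`. -/
lemma cliqueChromNum_le_card {V C : Type*} [Fintype C] (G : SimpleGraph V)
    (c : V → C)
    (h : ∀ S : Set V, Maximal G.IsClique S → 2 ≤ S.ncard → ¬ ∃ a : C, ∀ v ∈ S, c v = a) :
    cliqueChromNum G ≤ Fintype.card C := by
  apply Nat.sInf_le
  refine ⟨fun v => Fintype.equivFin C (c v), ?_⟩
  rintro S hS h2 ⟨a, ha⟩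
  refine h S hS h2 ⟨(Fintype.equivFin C).symm a, fun v hv => ?_⟩
  simpa using congrArg (Fintype.equivFin C).symm (ha v hv)

lemma exists_geo_colouring {V : Type*} [Fintype V] (d : ℕ) (hd : 1 ≤ d)
    (G : SimpleGraph V) (x : V → EuclideanSpace ℝ (Fin d)) (r : ℝ) (hr : 0 < r)
    (hadj : ∀ u v : V, G.Adj u v ↔ (u ≠ v ∧ dist (x u) (x v) ≤ r)) :
    ∃ c : V → (Fin d → ZMod (⌈Real.sqrt d⌉₊ + 1)) × Bool,
      ∀ S : Set V, Maximal G.IsClique S → 2 ≤ S.ncard →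
        ¬ ∃ a, ∀ v ∈ S, c v = a := by
  classical
  set N := ⌈Real.sqrt d⌉₊ with hNdef
  have hd0 : (0:ℝ) < d := by exact_mod_cast hd
  have ht : (0:ℝ) < Real.sqrt d := Real.sqrt_pos.2 hd0
  set s : ℝ := r / Real.sqrt d with hsdef
  have hs0 : 0 < s := div_pos hr ht
  set cell : V → Fin d → ℤ := fun v i => ⌊x v i / s⌋ with hcelldef
  -- coordinate-wise bounds
  have coord_le_dist : ∀ u v : V, ∀ i, |x u i - x v i| ≤ dist (x u) (x v) := by
    intro u v i
    rw [EuclideanSpace.dist_eq]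
    have h1 : |x u i - x v i| ^ 2 ≤ ∑ j, dist (x u j) (x v j) ^ 2 := by
      have := Finset.single_le_sum (f := fun j => dist (x u j) (x v j) ^ 2)
        (fun j _ => sq_nonneg _) (Finset.mem_univ i)
      simpa [Real.dist_eq] using this
    calc |x u i - x v i| = Real.sqrt (|x u i - x v i| ^ 2) := by
          rw [Real.sqrt_sq_eq_abs, abs_abs]
      _ ≤ _ := Real.sqrt_le_sqrt h1
  have close : ∀ u v : V, cell u = cell v → dist (x u) (x v) ≤ r := by
    intro u v h
    have hcoord : ∀ i, |x u i - x v i| < s := by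
      intro i
      have hf : ⌊x u i / s⌋ = ⌊x v i / s⌋ := congrFun h i
      have hfc : ((⌊x u i / s⌋ : ℤ) : ℝ) = ((⌊x v i / s⌋ : ℤ) : ℝ) := by exact_mod_cast hf
      have h1 : x u i / s - x v i / s < 1 := by
        linarith [Int.lt_floor_add_one (x u i / s), Int.floor_le (x v i / s)]
      have h2 : x v i / s - x u i / s < 1 := by
        linarith [Int.lt_floor_add_one (x v i / s), Int.floor_le (x u i / s)]
      have habs : |x u i / s - x v i / s| < 1 := abs_sub_lt_iff.2 ⟨h1, h2⟩
      have : |x u i - x v i| = s * |x u i / s - x v i / s| := by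
        rw [div_sub_div_same, abs_div, abs_of_pos hs0]
        field_simp
      rw [this]
      calc s * |x u i / s - x v i / s| < s * 1 := by
            exact mul_lt_mul_of_pos_left habs hs0
        _ = s := mul_one s
    rw [EuclideanSpace.dist_eq]
    have hsum : ∑ i, dist (x u i) (x v i) ^ 2 ≤ (d : ℝ) * s ^ 2 := by
      calc ∑ i, dist (x u i) (x v i) ^ 2 ≤ ∑ _i : Fin d, s ^ 2 := by
            apply Finset.sum_le_sum
            intro i _
            rw [Real.dist_eq]
            have := hcoord i
            nlinarith [abs_nonneg (x u i - x v i)]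
        _ = (d : ℝ) * s ^ 2 := by simp [mul_comm]
    calc Real.sqrt (∑ i, dist (x u i) (x v i) ^ 2) ≤ Real.sqrt ((d:ℝ) * s ^ 2) :=
          Real.sqrt_le_sqrt hsum
      _ = Real.sqrt d * s := by
          rw [Real.sqrt_mul hd0.le, Real.sqrt_sq hs0.le]
      _ = r := by rw [hsdef]; field_simp [ht.ne']
  have far : ∀ u v : V, cell u ≠ cell v →
      (∀ i, ((cell u i : ZMod (N+1)) = (cell v i : ZMod (N+1)))) →
      r < dist (x u) (x v) := by
    intro u v hne hmod
    obtain ⟨i, hi⟩ : ∃ i, cell u i ≠ cell v i := by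
      by_contra hc
      push_neg at hc
      exact hne (funext hc)
    have hdvd : ((N:ℤ)+1) ∣ cell v i - cell u i := by
      have := (ZMod.intCast_eq_intCast_iff _ _ _).1 (hmod i)
      exact_mod_cast this.dvd
    have habs : ((N:ℤ)+1) ≤ |cell u i - cell v i| := by
      have h0 : cell u i - cell v i ≠ 0 := sub_ne_zero.2 hi
      have : ((N:ℤ)+1) ∣ |cell u i - cell v i| := by
        rw [abs_sub_comm]
        exact (dvd_abs _ _).2 hdvd
      exact Int.le_of_dvd (abs_pos.2 h0) this
    -- coordinate gap
    have key : ((N:ℝ)) * s < |x u i - x v i| := by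
      have hfloor : ((N:ℝ)+1) ≤ |((cell u i : ℝ)) - ((cell v i : ℝ))| := by
        have : (((N:ℤ)+1 : ℤ) : ℝ) ≤ (|cell u i - cell v i| : ℤ) := by exact_mod_cast habs
        simpa [Int.cast_abs] using this
      have ha1 : (cell u i : ℝ) ≤ x u i / s := Int.floor_le _
      have ha2 : x u i / s < (cell u i : ℝ) + 1 := Int.lt_floor_add_one _
      have hb1 : (cell v i : ℝ) ≤ x v i / s := Int.floor_le _
      have hb2 : x v i / s < (cell v i : ℝ) + 1 := Int.lt_floor_add_one _
      have hq : (N:ℝ) < |x u i / s - x v i / s| := by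
        rcases abs_cases ((cell u i : ℝ) - (cell v i : ℝ)) with ⟨he, hc⟩ | ⟨he, hc⟩
        · rw [he] at hfloor
          have : (N:ℝ) < x u i / s - x v i / s := by linarith
          calc (N:ℝ) < x u i / s - x v i / s := this
            _ ≤ |x u i / s - x v i / s| := le_abs_self _
        · rw [he] at hfloor
          have : (N:ℝ) < x v i / s - x u i / s := by linarith
          calc (N:ℝ) < x v i / s - x u i / s := this
            _ ≤ |x u i / s - x v i / s| := by rw [abs_sub_comm]; exact le_abs_self _
      have heq : |x u i - x v i| = s * |x u i / s - x v i / s| := by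
        rw [div_sub_div_same, abs_div, abs_of_pos hs0]
        field_simp
      rw [heq]
      calc (N:ℝ) * s = s * (N:ℝ) := mul_comm _ _
        _ < s * |x u i / s - x v i / s| := mul_lt_mul_of_pos_left hq hs0
    have hNs : r ≤ (N:ℝ) * s := by
      have hle : Real.sqrt d ≤ (N:ℝ) := Nat.le_ceil _
      have : Real.sqrt d * s ≤ (N:ℝ) * s := mul_le_mul_of_nonneg_right hle hs0.le
      calc r = Real.sqrt d * s := by rw [hsdef]; field_simp [ht.ne']
        _ ≤ (N:ℝ) * s := this
    calc r ≤ (N:ℝ) * s := hNs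
      _ < |x u i - x v i| := key
      _ ≤ dist (x u) (x v) := coord_le_dist u v i
  -- the special vertex of each cell
  set pick : (Fin d → ℤ) → Option V :=
    fun f => if h : ∃ v, cell v = f then some h.choose else none with hpickdef
  have pick_cell : ∀ v : V, ∃ w : V, pick (cell v) = some w ∧ cell w = cell v := by
    intro v
    have h : ∃ u, cell u = cell v := ⟨v, rfl⟩
    refine ⟨h.choose, ?_, h.choose_spec⟩
    simp [hpickdef, dif_pos h]
  refine ⟨fun v => (fun i => ((cell v i : ZMod (N+1))), decide (pick (cell v) = some v)), ?_⟩
  rintro S hS h2 ⟨⟨q, b⟩, ha⟩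
  have hq : ∀ v ∈ S, ∀ i, ((cell v i : ZMod (N+1))) = q i := by
    intro v hv i
    exact congrFun (congrArg Prod.fst (ha v hv)) i
  have hb : ∀ v ∈ S, decide (pick (cell v) = some v) = b := by
    intro v hv
    exact congrArg Prod.snd (ha v hv)
  have hSfin : S.Finite := Set.toFinite S
  have same_cell : ∀ u ∈ S, ∀ v ∈ S, cell u = cell v := by
    intro u hu v hv
    by_cases huv : u = v
    · rw [huv]
    · have hadj' := (hadj u v).1 (hS.1 hu hv huv)
      by_contra hne
      have := far u v hne (fun i => (hq u hu i).trans (hq v hv i).symm)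
      linarith [hadj'.2]
  obtain ⟨u, v, hu, hv, huv⟩ := (Set.one_lt_ncard_iff hSfin).1 (by omega)
  cases b with
  | true =>
    have hsu : pick (cell u) = some u := by
      have := hb u hu; simpa using this
    have hsv : pick (cell v) = some v := by
      have := hb v hv; simpa using this
    have hc : cell u = cell v := same_cell u hu v hv
    rw [hc, hsv] at hsu
    exact huv (Option.some_injective _ hsu).symm
  | false =>
    obtain ⟨w, hw1, hw2⟩ := pick_cell u
    have hwS : w ∉ S := by
      intro hwmem
      have := hb w hwmem
      rw [same_cell w hwmem u hu, hw1] at this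
      simp at this
    have hclique : G.IsClique (insert w S) := by
      intro a hain b hbin hab
      rcases hain with rfl | haS
      · rcases hbin with rfl | hbS
        · exact absurd rfl hab
        · refine (hadj a b).2 ⟨hab, ?_⟩
          have : cell a = cell b := hw2.trans (same_cell u hu b hbS)
          exact close a b this
      · rcases hbin with rfl | hbS
        · refine (hadj a b).2 ⟨hab, ?_⟩
          have : cell a = cell b := (same_cell a haS u hu).trans hw2.symm
          exact close a b this
        · exact hS.1 haS hbS hab
    have := hS.2 hclique (Set.subset_insert w S)
    exact hwS (this (Set.mem_insert w S))

theorem cliqueChromNum_le_of_geometric {V : Type*} [Fintype V] (d : ℕ) (hd : 1 ≤ d)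
    (G : SimpleGraph V) (hG : IsGeometricIn G d) :
    cliqueChromNum G ≤ 2 * (⌈Real.sqrt d⌉₊ + 1) ^ d ∧
    ((2 * (⌈Real.sqrt d⌉₊ + 1) ^ d : ℕ) : ℝ) <
      2 * Real.exp (2 * Real.sqrt d) * (d : ℝ) ^ ((d : ℝ) / 2) := by
  obtain ⟨x, r, hr, hadj⟩ := hG
  constructor
  · obtain ⟨c, hc⟩ := exists_geo_colouring d hd G x r hr hadj
    have := cliqueChromNum_le_card G c hc
    have hcard : Fintype.card ((Fin d → ZMod (⌈Real.sqrt d⌉₊ + 1)) × Bool)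
        = 2 * (⌈Real.sqrt d⌉₊ + 1) ^ d := by
      rw [Fintype.card_prod, Fintype.card_fun, ZMod.card, Fintype.card_fin, Fintype.card_bool]
      ring
    rwa [hcard] at this
  · set N := ⌈Real.sqrt d⌉₊ with hN
    set t := Real.sqrt d with htdef
    have hd0 : (0:ℝ) < d := by exact_mod_cast hd
    have ht : (0:ℝ) < t := Real.sqrt_pos.2 hd0
    have ht2 : t * t = d := Real.mul_self_sqrt hd0.le
    have h1 : (N : ℝ) < t + 1 := Nat.ceil_lt_add_one ht.le
    have hexp : t + 2 ≤ t * Real.exp (2 / t) := by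
      have := Real.add_one_le_exp (2 / t)
      have h3 : t * (2 / t + 1) ≤ t * Real.exp (2 / t) :=
        mul_le_mul_of_nonneg_left this ht.le
      calc t + 2 = t * (2 / t + 1) := by field_simp; ring
        _ ≤ t * Real.exp (2 / t) := h3
    have hbase : ((N:ℝ) + 1) < t * Real.exp (2 / t) := by linarith
    have hpow : ((N:ℝ) + 1) ^ d < (t * Real.exp (2 / t)) ^ d :=
      pow_lt_pow_left₀ hbase (by positivity) (by omega)
    have hrhs : (t * Real.exp (2 / t)) ^ d = (d:ℝ) ^ ((d:ℝ)/2) * Real.exp (2 * t) := by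
      rw [mul_pow, ← Real.exp_nat_mul]
      have hda : (d:ℝ) * (2 / t) = 2 * t := by
        field_simp
        nlinarith [ht2]
      rw [hda]
      congr 1
      rw [← Real.rpow_natCast t d, htdef, Real.sqrt_eq_rpow,
        ← Real.rpow_mul hd0.le]
      congr 1
      ring
    push_cast
    have : ((N:ℝ) + 1) ^ d < (d:ℝ) ^ ((d:ℝ)/2) * Real.exp (2 * t) := hrhs ▸ hpow
    nlinarith [this, Real.exp_pos (2*t), Real.rpow_nonneg hd0.le ((d:ℝ)/2)]
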